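/- arXiv:2001.01867 — 2 statements merged into one kernel-verified Lean document; each statement's English description precedes it below -/
import Mathlib

section
/- Let D = (D_1, D_2) with D_1, D_2 : ℤ_{≥1} → (0,∞) (convention D_i(0) = 1). Let U = ((u_1,2),…,(u_k,2)) and V = ((v_1,1),…,(v_k,1)) with u_1 < … < u_k and v_1 < … < v_k be an endpoint pair. With the conventions v_0 = −∞ and u_{k+1} = +∞, set a_i = u_i ∨ (v_{i−1}+1) and b_i = (u_{i+1}−1) ∧ v_i for i ∈ {1,…,k}; call the interval ⟦a_i,b_i⟧ type 1 whenever a_i ≤ b_i, call an integer c with v_{i−1} < c < u_i for some i ∈ {1,…,k} type 0, and call all remaining integers in ⟦u_1, v_k⟧ type 2. Then D[U→V] = ∏_{⟦a,b⟧ type 1} D[(a,2)→(b,1)] · ∏_{c type 2} D[(c,2)→(c,1)]. -/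
open scoped BigOperators

/-- Value of `f : ℤ_{≥ r} → ℝ`, with the convention that values below the domain base
`r` equal `1`. -/
noncomputable def clo (r : ℤ) (f : ℤ → ℝ) (y : ℤ) : ℝ := if y < r then 1 else f y

/-- A lattice step: one to the right, or down one level. -/
def IsStep (p q : ℤ × ℤ) : Prop :=
  (q.1 = p.1 + 1 ∧ q.2 = p.2) ∨ (q.1 = p.1 ∧ q.2 = p.2 - 1)

/-- A non-intersecting multipath from `U` to `V`; points `(x, m)` must satisfy the
domain condition `x ≥ rl m`, and the paths are pairwise disjoint as sets of points. -/
structure Multipath (rl : ℤ → ℤ) {k : ℕ} (U V : Fin k → ℤ × ℤ) where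
  pts : Fin k → List (ℤ × ℤ)
  ne : ∀ i, pts i ≠ []
  chain : ∀ i, (pts i).Chain' IsStep
  head : ∀ i, (pts i).head? = some (U i)
  last : ∀ i, (pts i).getLast? = some (V i)
  dom : ∀ i, ∀ p ∈ pts i, rl p.2 ≤ p.1
  disj : ∀ i j, i ≠ j → ∀ p ∈ pts i, p ∉ pts j

/-- The weight of a single path: the product of `D_m(x)/D_m(x−1)` over its points,
with the convention `D_m(r_m − 1) = 1`. -/
noncomputable def pathWeight (rl : ℤ → ℤ) (D : ℤ → ℤ → ℝ) (l : List (ℤ × ℤ)) : ℝ :=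
  (l.map (fun p => D p.2 p.1 / clo (rl p.2) (D p.2) (p.1 - 1))).prod

/-- The partition function `D[U → V]`: the sum over non-intersecting multipaths from
`U` to `V` of the product of the weights of the paths (a finite sum, written as a
`tsum` over the type of multipaths; it is `0` if no multipath exists). -/
noncomputable def partFn (rl : ℤ → ℤ) (D : ℤ → ℤ → ℝ) {k : ℕ} (U V : Fin k → ℤ × ℤ) : ℝ :=
  ∑' π : Multipath rl U V, ∏ i, pathWeight rl D (π.pts i)

open scoped Classical


-- ===== auxiliary development =====

/-- horizontal segment at level m from x to y -/
def hseg (m x y : ℤ) : List (ℤ × ℤ) := (List.range (y + 1 - x).toNat).map (fun n : ℕ => (x + (n:ℤ), m))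

lemma hseg_eq_nil (m x y : ℤ) (h : y < x) : hseg m x y = [] := by
  simp [hseg, List.range_eq_nil]; omega

lemma hseg_cons (m x y : ℤ) (h : x ≤ y) : hseg m x y = (x, m) :: hseg m (x+1) y := by
  have h1 : (y + 1 - x).toNat = (y + 1 - (x+1)).toNat + 1 := by omega
  rw [hseg, hseg, h1, List.range_succ_eq_map, List.map_cons, List.map_map]
  refine congrArg₂ _ (by norm_num) ?_
  apply List.map_congr_left
  intro n _
  simp [Function.comp]
  push_cast
  ring

lemma hseg_ne (m x y : ℤ) (h : x ≤ y) : hseg m x y ≠ [] := by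
  rw [hseg_cons m x y h]; simp

lemma hseg_head (m x y : ℤ) (h : x ≤ y) : (hseg m x y).head? = some (x, m) := by
  rw [hseg_cons m x y h]; rfl

lemma mem_hseg (m x y : ℤ) (p : ℤ × ℤ) : p ∈ hseg m x y ↔ p.2 = m ∧ x ≤ p.1 ∧ p.1 ≤ y := by
  simp only [hseg, List.mem_map, List.mem_range]
  constructor
  · rintro ⟨n, hn, rfl⟩
    refine ⟨rfl, by simp, by simp; omega⟩
  · rintro ⟨h2, hx, hy⟩
    refine ⟨(p.1 - x).toNat, by omega, ?_⟩
    have : x + ((p.1 - x).toNat : ℤ) = p.1 := by omega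
    rw [this, ← h2]

lemma hseg_getLast (m x y : ℤ) (h : x ≤ y) : (hseg m x y).getLast? = some (y, m) := by
  obtain ⟨n, hn⟩ : ∃ n : ℕ, y = x + n := ⟨(y - x).toNat, by omega⟩
  subst hn
  induction n generalizing x with
  | zero =>
    rw [show ((0:ℕ):ℤ) = 0 by norm_num, add_zero, hseg_cons m x x le_rfl,
      hseg_eq_nil m (x+1) x (by omega)]
    rfl
  | succ n ih =>
    have hc : x + ((n:ℕ)+1:ℕ) = (x + 1) + (n:ℕ) := by push_cast; ring
    rw [hc, hseg_cons m x _ (by omega), show (x,m) :: hseg m (x+1) (x+1+(n:ℕ)) =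
      [(x,m)] ++ hseg m (x+1) (x+1+(n:ℕ)) from rfl,
      List.getLast?_append_of_ne_nil _ (hseg_ne m (x+1) _ (by omega))]
    exact ih (x+1) (by omega)

lemma hseg_chain (m x y : ℤ) : (hseg m x y).Chain' IsStep := by
  rcases le_or_gt x y with h | h
  · obtain ⟨n, hn⟩ : ∃ n : ℕ, y = x + n := ⟨(y - x).toNat, by omega⟩
    subst hn
    induction n generalizing x with
    | zero =>
      rw [show ((0:ℕ):ℤ) = 0 by norm_num, add_zero, hseg_cons m x x le_rfl,
        hseg_eq_nil m (x+1) x (by omega)]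
      simp [List.Chain']
    | succ n ih =>
      have hc : x + ((n:ℕ)+1:ℕ) = (x + 1) + (n:ℕ) := by push_cast; ring
      rw [hc, hseg_cons m x _ (by omega)]
      refine List.isChain_cons.mpr ⟨?_, ih (x+1) (by omega)⟩
      intro q hq
      rw [hseg_head m (x+1) _ (by omega)] at hq
      cases hq
      left; exact ⟨rfl, rfl⟩
  · rw [hseg_eq_nil m x y h]; simp [List.Chain']

lemma hseg_map_prod (m x y : ℤ) (f : ℤ × ℤ → ℝ) :
    ((hseg m x y).map f).prod = ∏ c ∈ Finset.Icc x y, f (c, m) := by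
  rcases le_or_gt x y with h | h
  · obtain ⟨n, hn⟩ : ∃ n : ℕ, y = x + n := ⟨(y - x).toNat, by omega⟩
    subst hn
    induction n generalizing x with
    | zero =>
      rw [show ((0:ℕ):ℤ) = 0 by norm_num, add_zero, hseg_cons m x x le_rfl,
        hseg_eq_nil m (x+1) x (by omega)]
      simp
    | succ n ih =>
      have hc : x + ((n:ℕ)+1:ℕ) = (x + 1) + (n:ℕ) := by push_cast; ring
      rw [hc, hseg_cons m x _ (by omega), List.map_cons, List.prod_cons]
      have hicc : Finset.Icc x (x+1+(n:ℕ)) = insert x (Finset.Icc (x+1) (x+1+(n:ℕ))) := by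
        ext c; simp only [Finset.mem_Icc, Finset.mem_insert]; omega
      rw [hicc, Finset.prod_insert (by simp only [Finset.mem_Icc]; omega)]
      congr 1
      exact ih (x+1) (by omega)
  · rw [hseg_eq_nil m x y h, Finset.Icc_eq_empty (by omega)]; simp


def pathP (x y t : ℤ) : List (ℤ × ℤ) := hseg 2 x t ++ hseg 1 t y

lemma pathP_ne (x y t : ℤ) (h : x ≤ t) : pathP x y t ≠ [] := by
  simp only [pathP, ne_eq, List.append_eq_nil_iff]
  rintro ⟨h1, -⟩; exact hseg_ne 2 x t h h1

lemma pathP_head (x y t : ℤ) (h : x ≤ t) : (pathP x y t).head? = some (x, 2) := by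
  rw [pathP, List.head?_append_of_ne_nil _ (hseg_ne 2 x t h), hseg_head 2 x t h]

lemma pathP_last (x y t : ℤ) (h : t ≤ y) : (pathP x y t).getLast? = some (y, 1) := by
  rw [pathP, List.getLast?_append_of_ne_nil _ (hseg_ne 1 t y h), hseg_getLast 1 t y h]

lemma pathP_chain (x y t : ℤ) : (pathP x y t).Chain' IsStep := by
  refine List.IsChain.append (hseg_chain 2 x t) (hseg_chain 1 t y) ?_
  intro p hp q hq
  rcases le_or_gt x t with h1 | h1
  · rcases le_or_gt t y with h2 | h2
    · rw [hseg_getLast 2 x t h1] at hp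
      rw [hseg_head 1 t y h2] at hq
      cases hp; cases hq
      right; exact ⟨rfl, by norm_num⟩
    · rw [hseg_eq_nil 1 t y h2] at hq; simp at hq
  · rw [hseg_eq_nil 2 x t h1] at hp; simp at hp

lemma mem_pathP (x y t : ℤ) (p : ℤ × ℤ) :
    p ∈ pathP x y t ↔ (p.2 = 2 ∧ x ≤ p.1 ∧ p.1 ≤ t) ∨ (p.2 = 1 ∧ t ≤ p.1 ∧ p.1 ≤ y) := by
  simp [pathP, mem_hseg]

lemma pathP_inj (x y t t' : ℤ) (h : x ≤ t) (h' : t ≤ y) (g : x ≤ t') (g' : t' ≤ y)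
    (e : pathP x y t = pathP x y t') : t = t' := by
  have h1 : ((t:ℤ), (2:ℤ)) ∈ pathP x y t' := by
    rw [← e, mem_pathP]; left; exact ⟨rfl, h, le_rfl⟩
  have h2 : ((t':ℤ), (2:ℤ)) ∈ pathP x y t := by
    rw [e, mem_pathP]; left; exact ⟨rfl, g, le_rfl⟩
  rw [mem_pathP] at h1 h2
  omega

lemma last_level_le : ∀ (l : List (ℤ × ℤ)) (p q : ℤ × ℤ), (p :: l).Chain' IsStep →
    (p :: l).getLast? = some q → q.2 ≤ p.2 := by
  intro l
  induction l with
  | nil => intro p q _ h; simp at h; rw [h]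
  | cons r l ih =>
    intro p q hc hl
    simp only [List.Chain', List.isChain_cons_cons] at hc
    have h1 : q.2 ≤ r.2 := ih r q hc.2 (by simpa using hl)
    rcases hc.1 with ⟨_, h2⟩ | ⟨_, h2⟩ <;> omega

lemma classify1 : ∀ (l : List (ℤ × ℤ)) (x y : ℤ), l.Chain' IsStep →
    l.head? = some (x, 1) → l.getLast? = some (y, 1) → x ≤ y ∧ l = hseg 1 x y := by
  intro l
  induction l with
  | nil => intro x y _ h; simp at h
  | cons p l ih =>
    intro x y hc hh hl
    simp only [List.head?_cons, Option.some_inj] at hh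
    subst hh
    cases l with
    | nil =>
      simp only [List.getLast?_singleton, Option.some_inj] at hl
      have : x = y := congrArg Prod.fst hl
      subst this
      refine ⟨le_rfl, ?_⟩
      rw [hseg_cons 1 x x le_rfl, hseg_eq_nil 1 (x+1) x (by omega)]
    | cons r l' =>
      simp only [List.Chain', List.isChain_cons_cons] at hc
      have hl' : (r :: l').getLast? = some (y, 1) := by simpa using hl
      rcases hc.1 with ⟨h1, h2⟩ | ⟨h1, h2⟩
      · have hr : r = (x + 1, 1) := by
          have := Prod.mk.eta (p := r); rw [← this, h1, h2]
        subst hr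
        obtain ⟨hxy, he⟩ := ih (x+1) y hc.2 (by simp) hl'
        refine ⟨by omega, ?_⟩
        rw [hseg_cons 1 x y (by omega), ← he]
      · exfalso
        have := last_level_le l' r (y, 1) hc.2 hl'
        simp only at this
        omega

lemma classify2 : ∀ (l : List (ℤ × ℤ)) (x y : ℤ), l.Chain' IsStep →
    l.head? = some (x, 2) → l.getLast? = some (y, 1) →
    ∃ t, x ≤ t ∧ t ≤ y ∧ l = pathP x y t := by
  intro l
  induction l with
  | nil => intro x y _ h; simp at h
  | cons p l ih =>
    intro x y hc hh hl
    simp only [List.head?_cons, Option.some_inj] at hh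
    subst hh
    cases l with
    | nil =>
      simp only [List.getLast?_singleton, Option.some_inj] at hl
      exact absurd (congrArg Prod.snd hl) (by norm_num)
    | cons r l' =>
      simp only [List.Chain', List.isChain_cons_cons] at hc
      have hl' : (r :: l').getLast? = some (y, 1) := by simpa using hl
      rcases hc.1 with ⟨h1, h2⟩ | ⟨h1, h2⟩
      · have hr : r = (x + 1, 2) := by
          have := Prod.mk.eta (p := r); rw [← this, h1, h2]
        subst hr
        obtain ⟨t, ht1, ht2, he⟩ := ih (x+1) y hc.2 (by simp) hl'
        refine ⟨t, by omega, ht2, ?_⟩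
        rw [pathP, hseg_cons 2 x t (by omega), List.cons_append, ← pathP, ← he]
      · have hr : r = (x, 1) := by
          have := Prod.mk.eta (p := r); rw [← this, h1]; norm_num [h2]
        subst hr
        obtain ⟨hxy, he⟩ := classify1 _ x y hc.2 (by simp) hl'
        refine ⟨x, le_rfl, hxy, ?_⟩
        rw [pathP, hseg_cons 2 x x le_rfl, hseg_eq_nil 2 (x+1) x (by omega), ← he]
        simp


noncomputable def wfun (D : ℤ → ℤ → ℝ) (x y c : ℤ) : ℝ :=
  D 2 c * D 1 y / (clo 1 (D 2) (x-1) * clo 1 (D 1) (c-1))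

lemma clo_pos (f : ℤ → ℝ) (hf : ∀ z : ℤ, 1 ≤ z → 0 < f z) (z : ℤ) : 0 < clo 1 f z := by
  unfold clo; split
  · norm_num
  · exact hf z (by omega)

lemma clo_eq (f : ℤ → ℝ) (z : ℤ) (h : 1 ≤ z) : clo 1 f z = f z := by
  unfold clo; split
  · omega
  · rfl

lemma tele (f : ℤ → ℝ) (hf : ∀ z : ℤ, 1 ≤ z → 0 < f z) (m : ℤ) (hm : 1 ≤ m) :
    ∀ n : ℤ, m - 1 ≤ n →
      ∏ c ∈ Finset.Icc m n, f c / clo 1 f (c-1) = clo 1 f n / clo 1 f (m-1) := by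
  refine Int.le_induction ?_ ?_
  · rw [Finset.Icc_eq_empty (by omega), Finset.prod_empty,
      div_self (ne_of_gt (clo_pos f hf (m-1)))]
  · intro n hn ih
    have hicc : Finset.Icc m (n+1) = insert (n+1) (Finset.Icc m n) := by
      ext c; simp only [Finset.mem_Icc, Finset.mem_insert]; omega
    rw [hicc, Finset.prod_insert (by simp only [Finset.mem_Icc]; omega), ih]
    have h1 : clo 1 f (n+1) = f (n+1) := clo_eq f _ (by omega)
    have h2 : clo 1 f n ≠ 0 := ne_of_gt (clo_pos f hf n)
    have h3 : clo 1 f (m-1) ≠ 0 := ne_of_gt (clo_pos f hf (m-1))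
    rw [h1, add_sub_cancel_right]
    field_simp

lemma pathWeight_pathP (D : ℤ → ℤ → ℝ)
    (hD : ∀ i : ℤ, i = 1 ∨ i = 2 → ∀ z : ℤ, 1 ≤ z → 0 < D i z)
    (x y t : ℤ) (hx : 1 ≤ x) (h1 : x ≤ t) (h2 : t ≤ y) :
    pathWeight (fun _ => 1) D (pathP x y t) = wfun D x y t := by
  rw [pathP, pathWeight, List.map_append, List.prod_append, hseg_map_prod, hseg_map_prod]
  simp only
  rw [tele (D 2) (hD 2 (Or.inr rfl)) x hx t (by omega),
      tele (D 1) (hD 1 (Or.inl rfl)) t (by omega) y (by omega),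
      clo_eq (D 2) t (by omega), clo_eq (D 1) y (by omega), wfun]
  field_simp

lemma Multipath.ext' {rl : ℤ → ℤ} {k : ℕ} {U V : Fin k → ℤ × ℤ} {π₁ π₂ : Multipath rl U V}
    (h : π₁.pts = π₂.pts) : π₁ = π₂ := by
  cases π₁; cases π₂; simp only at h; subst h; rfl

/-- the rectangle condition -/
def Cnd {k : ℕ} (x y : Fin k → ℤ) (t : Fin k → ℤ) : Prop :=
  (∀ i, x i ≤ t i ∧ t i ≤ y i) ∧
    (∀ i j : Fin k, i.val + 1 = j.val → t i < x j ∧ y i < t j)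

def buildMP {k : ℕ} (x y : Fin k → ℤ) (hx : StrictMono x) (hy : StrictMono y)
    (hx1 : ∀ i, 1 ≤ x i) (t : Fin k → ℤ) (ht : Cnd x y t) :
    Multipath (fun _ => 1) (fun i => (x i, 2)) (fun i => (y i, 1)) := by
  refine ⟨fun i => pathP (x i) (y i) (t i), fun i => pathP_ne _ _ _ (ht.1 i).1,
    fun i => pathP_chain _ _ _, fun i => pathP_head _ _ _ (ht.1 i).1,
    fun i => pathP_last _ _ _ (ht.1 i).2, ?_, ?_⟩
  · intro i p hp
    rw [mem_pathP] at hp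
    have := hx1 i
    have := (ht.1 i).1
    rcases hp with ⟨-, h1, -⟩ | ⟨-, h1, -⟩ <;> simp <;> omega
  · -- disjointness
    have key : ∀ i j : Fin k, i < j → ∀ p, p ∈ pathP (x i) (y i) (t i) →
        p ∉ pathP (x j) (y j) (t j) := by
      intro i j hij p hpi hpj
      have hjk : i.val + 1 < k := lt_of_le_of_lt (by omega) j.isLt
      set i1 : Fin k := ⟨i.val + 1, hjk⟩ with hi1
      have hadj1 : t i < x i1 := (ht.2 i i1 rfl).1
      have hj1k : j.val - 1 < k := by omega
      set j1 : Fin k := ⟨j.val - 1, hj1k⟩ with hj1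
      have hadj2 : y j1 < t j := (ht.2 j1 j (by simp [hj1]; omega)).2
      have hxj : x i1 ≤ x j := hx.monotone (by simp [hi1, Fin.le_def]; omega)
      have hyj : y i ≤ y j1 := hy.monotone (by simp [hj1, Fin.le_def]; omega)
      rw [mem_pathP] at hpi hpj
      rcases hpi with ⟨e1, h1, h2⟩ | ⟨e1, h1, h2⟩ <;>
        rcases hpj with ⟨e2, g1, g2⟩ | ⟨e2, g1, g2⟩ <;> omega
    intro i j hij p hpi hpj
    rcases lt_or_gt_of_ne hij with h | h
    · exact key i j h p hpi hpj
    · exact key j i h p hpj hpi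

lemma buildMP_pts {k : ℕ} (x y : Fin k → ℤ) (hx : StrictMono x) (hy : StrictMono y)
    (hx1 : ∀ i, 1 ≤ x i) (t : Fin k → ℤ) (ht : Cnd x y t) :
    (buildMP x y hx hy hx1 t ht).pts = fun i => pathP (x i) (y i) (t i) := rfl

lemma destructMP {k : ℕ} (x y : Fin k → ℤ) (hx : StrictMono x) (hy : StrictMono y)
    (π : Multipath (fun _ => 1) (fun i => (x i, 2)) (fun i => (y i, 1))) :
    ∃ t : Fin k → ℤ, Cnd x y t ∧ ∀ i, π.pts i = pathP (x i) (y i) (t i) := by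
  have h1 : ∀ i, ∃ t, x i ≤ t ∧ t ≤ y i ∧ π.pts i = pathP (x i) (y i) t :=
    fun i => classify2 (π.pts i) (x i) (y i) (π.chain i) (π.head i) (π.last i)
  choose t ht1 ht2 ht3 using h1
  refine ⟨t, ⟨fun i => ⟨ht1 i, ht2 i⟩, ?_⟩, ht3⟩
  intro i j hij
  have hlt : i < j := by rw [Fin.lt_def]; omega
  constructor
  · by_contra hcon
    push_neg at hcon
    have hp1 : ((x j : ℤ), (2:ℤ)) ∈ π.pts i := by
      rw [ht3 i, mem_pathP]
      exact Or.inl ⟨rfl, le_of_lt (hx hlt), hcon⟩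
    have hp2 : ((x j : ℤ), (2:ℤ)) ∈ π.pts j := by
      rw [ht3 j, mem_pathP]
      exact Or.inl ⟨rfl, le_rfl, ht1 j⟩
    exact π.disj i j (ne_of_lt hlt) _ hp1 hp2
  · by_contra hcon
    push_neg at hcon
    have hp1 : ((y i : ℤ), (1:ℤ)) ∈ π.pts i := by
      rw [ht3 i, mem_pathP]
      exact Or.inr ⟨rfl, ht2 i, le_rfl⟩
    have hp2 : ((y i : ℤ), (1:ℤ)) ∈ π.pts j := by
      rw [ht3 j, mem_pathP]
      exact Or.inr ⟨rfl, hcon, le_of_lt (hy hlt)⟩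
    exact π.disj i j (ne_of_lt hlt) _ hp1 hp2

lemma master (k : ℕ) (D : ℤ → ℤ → ℝ)
    (hD : ∀ i : ℤ, i = 1 ∨ i = 2 → ∀ z : ℤ, 1 ≤ z → 0 < D i z)
    (x y : Fin k → ℤ) (hx : StrictMono x) (hy : StrictMono y) (hx1 : ∀ i, 1 ≤ x i)
    (A B : Fin k → ℤ)
    (hAB : ∀ t : Fin k → ℤ, Cnd x y t ↔ ∀ i, A i ≤ t i ∧ t i ≤ B i) :
    partFn (fun _ => 1) D (fun i => (x i, 2)) (fun i => (y i, 1))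
      = ∏ i, ∑ c ∈ Finset.Icc (A i) (B i), wfun D (x i) (y i) c := by
  classical
  have destruct := destructMP x y hx hy
  -- the equivalence
  let T := ∀ i : Fin k, (Finset.Icc (A i) (B i) : Finset ℤ)
  have hcndT : ∀ s : T, Cnd x y (fun i => (s i : ℤ)) := by
    intro s
    exact (hAB _).2 (fun i => Finset.mem_Icc.mp (s i).2)
  let g : T → Multipath (fun _ => 1) (fun i => (x i, 2)) (fun i => (y i, 1)) :=
    fun s => buildMP x y hx hy hx1 (fun i => (s i : ℤ)) (hcndT s)
  have hgpts : ∀ s : T, (g s).pts = fun i => pathP (x i) (y i) (s i : ℤ) := fun s => rfl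
  have hbij : Function.Bijective g := by
    constructor
    · intro s s' hss
      have h1 := congrFun (congrArg Multipath.pts hss)
      funext i
      have h2 := h1 i
      rw [hgpts, hgpts] at h2
      have hc := hcndT s
      have hc' := hcndT s'
      ext
      exact pathP_inj _ _ _ _ (hc.1 i).1 (hc.1 i).2 (hc'.1 i).1 (hc'.1 i).2 h2
    · intro π
      obtain ⟨t, ht, hpts⟩ := destruct π
      have hmem : ∀ i, t i ∈ Finset.Icc (A i) (B i) := by
        intro i
        rw [Finset.mem_Icc]
        exact (hAB t).1 ht i
      refine ⟨fun i => ⟨t i, hmem i⟩, ?_⟩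
      refine (Multipath.ext' ?_).symm
      rw [hgpts]
      funext i
      exact hpts i
  let e : T ≃ Multipath (fun _ => 1) (fun i => (x i, 2)) (fun i => (y i, 1)) :=
    Equiv.ofBijective g hbij
  rw [partFn, ← Equiv.tsum_eq e (fun π => ∏ i, pathWeight (fun _ => 1) D (π.pts i))]
  rw [tsum_fintype]
  have hterm : ∀ s : T, ∏ i, pathWeight (fun _ => 1) D ((e s).pts i)
      = ∏ i, wfun D (x i) (y i) (s i : ℤ) := by
    intro s
    refine Finset.prod_congr rfl (fun i _ => ?_)
    show pathWeight (fun _ => 1) D ((g s).pts i) = _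
    rw [hgpts]
    exact pathWeight_pathP D hD _ _ _ (hx1 i) ((hcndT s).1 i).1 ((hcndT s).1 i).2
  rw [Finset.sum_congr rfl (fun s _ => hterm s)]
  rw [← Fintype.prod_sum (fun i (c : (Finset.Icc (A i) (B i) : Finset ℤ)) =>
    wfun D (x i) (y i) (c : ℤ))]
  refine Finset.prod_congr rfl (fun i _ => ?_)
  exact (Finset.sum_coe_sort _ _)

lemma tele2 (f : ℤ → ℝ) (hf : ∀ z : ℤ, f z ≠ 0) (m : ℤ) :
    ∀ n : ℤ, m - 1 ≤ n → ∏ c ∈ Finset.Icc m n, f c / f (c-1) = f n / f (m-1) := by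
  refine Int.le_induction ?_ ?_
  · rw [Finset.Icc_eq_empty (by omega), Finset.prod_empty, div_self (hf _)]
  · intro n hn ih
    have hicc : Finset.Icc m (n+1) = insert (n+1) (Finset.Icc m n) := by
      ext c; simp only [Finset.mem_Icc, Finset.mem_insert]; omega
    rw [hicc, Finset.prod_insert (by simp only [Finset.mem_Icc]; omega), ih,
      show n + 1 - 1 = n from by ring]
    field_simp
    rw [mul_comm (f n) (f (m-1))]
    exact mul_div_mul_right _ _ (hf n)

lemma single_partFn (D : ℤ → ℤ → ℝ)
    (hD : ∀ i : ℤ, i = 1 ∨ i = 2 → ∀ z : ℤ, 1 ≤ z → 0 < D i z)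
    (p q : ℤ) (hp : 1 ≤ p) :
    partFn (fun _ => 1) D (fun _ : Fin 1 => (p, 2)) (fun _ => (q, 1))
      = ∑ c ∈ Finset.Icc p q, wfun D p q c := by
  have hmono : ∀ f : Fin 1 → ℤ, StrictMono f := by
    intro f i j hij
    exact absurd (Subsingleton.elim i j) (ne_of_lt hij)
  have hAB : ∀ t : Fin 1 → ℤ, Cnd (fun _ => p) (fun _ => q) t ↔
      ∀ i, (fun _ : Fin 1 => p) i ≤ t i ∧ t i ≤ (fun _ : Fin 1 => q) i := by
    intro t
    constructor
    · exact fun h => h.1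
    · intro h
      refine ⟨h, fun i j hij => ?_⟩
      exact absurd hij (by omega)
  have := master 1 D hD (fun _ => p) (fun _ => q) (hmono _) (hmono _) (fun _ => hp)
    (fun _ => p) (fun _ => q) hAB
  refine this.trans ?_
  exact Fin.prod_univ_one _

lemma prod_fin_icc (k : ℕ) (F : ℕ → ℝ) :
    ∏ i : Fin k, F (i.val + 1) = ∏ n ∈ Finset.Icc 1 k, F n := by
  rw [Fin.prod_univ_eq_prod_range (fun i => F (i+1)) k]
  refine Finset.prod_nbij' (fun i => i+1) (fun n => n-1) ?_ ?_ ?_ ?_ ?_ <;>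
    intros a ha <;> simp only [Finset.mem_range, Finset.mem_Icc] at * <;> omega

/-- **The decomposition (2.14) in Step 2 of the proof of Theorem 2.6:** the two-level
partition function factorizes over the type 1 intervals `⟦a_i, b_i⟧` and the type 2
integers of `⟦u_1, v_k⟧`. -/
theorem type_decomposition (k : ℕ) (hk : 1 ≤ k) (D : ℤ → ℤ → ℝ)
    (hD : ∀ i : ℤ, i = 1 ∨ i = 2 → ∀ x : ℤ, 1 ≤ x → 0 < D i x)
    (u v : ℕ → ℤ) (hu1 : 1 ≤ u 1) (hv1 : 1 ≤ v 1)
    (hu : StrictMonoOn u (Set.Icc 1 k)) (hv : StrictMonoOn v (Set.Icc 1 k))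
    (hpair : Nonempty (Multipath (fun _ => 1)
      (fun i : Fin k => (u (i.val + 1), 2)) (fun i => (v (i.val + 1), 1))))
    (a b : ℕ → ℤ)
    (ha : ∀ i, 1 ≤ i → i ≤ k → a i = if i = 1 then u 1 else max (u i) (v (i - 1) + 1))
    (hb : ∀ i, 1 ≤ i → i ≤ k → b i = if i = k then v k else min (u (i + 1) - 1) (v i)) :
    partFn (fun _ => 1) D
        (fun i : Fin k => (u (i.val + 1), 2)) (fun i => (v (i.val + 1), 1))
      = (∏ i ∈ (Finset.Icc 1 k).filter (fun i => a i ≤ b i),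
          partFn (fun _ => 1) D (fun _ : Fin 1 => (a i, 2)) (fun _ => (b i, 1)))
        * ∏ c ∈ (Finset.Icc (u 1) (v k)).filter (fun c =>
            ¬ (∃ i ∈ Finset.Icc 1 k, (2 ≤ i → v (i - 1) < c) ∧ c < u i) ∧
            ¬ (∃ i ∈ Finset.Icc 1 k, a i ≤ b i ∧ a i ≤ c ∧ c ≤ b i)),
          partFn (fun _ => 1) D (fun _ : Fin 1 => (c, 2)) (fun _ => (c, 1)) := by
  classical
  have hD1 := hD 1 (Or.inl rfl)
  have hD2 := hD 2 (Or.inr rfl)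
  have hclo1 : ∀ z : ℤ, 0 < clo 1 (D 1) z := clo_pos _ hD1
  have hclo2 : ∀ z : ℤ, 0 < clo 1 (D 2) z := clo_pos _ hD2
  -- monotonicity helpers on ℕ indices
  have humono : ∀ m n : ℕ, 1 ≤ m → m < n → n ≤ k → u m < u n := by
    intro m n h1 h2 h3
    exact hu (Set.mem_Icc.mpr ⟨h1, by omega⟩) (Set.mem_Icc.mpr ⟨by omega, h3⟩) h2
  have hvmono : ∀ m n : ℕ, 1 ≤ m → m < n → n ≤ k → v m < v n := by
    intro m n h1 h2 h3
    exact hv (Set.mem_Icc.mpr ⟨h1, by omega⟩) (Set.mem_Icc.mpr ⟨by omega, h3⟩) h2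
  have hule : ∀ m n : ℕ, 1 ≤ m → m ≤ n → n ≤ k → u m ≤ u n := by
    intro m n h1 h2 h3
    rcases eq_or_lt_of_le h2 with h | h
    · rw [h]
    · exact le_of_lt (humono m n h1 h h3)
  have hvle : ∀ m n : ℕ, 1 ≤ m → m ≤ n → n ≤ k → v m ≤ v n := by
    intro m n h1 h2 h3
    rcases eq_or_lt_of_le h2 with h | h
    · rw [h]
    · exact le_of_lt (hvmono m n h1 h h3)
  have hupos : ∀ n, 1 ≤ n → n ≤ k → 1 ≤ u n := fun n h1 h2 => le_trans hu1 (hule 1 n le_rfl h1 h2)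
  have hvpos : ∀ n, 1 ≤ n → n ≤ k → 1 ≤ v n := fun n h1 h2 => le_trans hv1 (hvle 1 n le_rfl h1 h2)
  -- the Fin-indexed data
  have hxmono : StrictMono (fun i : Fin k => u (i.val + 1)) := by
    intro i j hij
    exact humono (i.val+1) (j.val+1) (by omega) (by rw [Fin.lt_def] at hij; omega) j.isLt
  have hymono : StrictMono (fun i : Fin k => v (i.val + 1)) := by
    intro i j hij
    exact hvmono (i.val+1) (j.val+1) (by omega) (by rw [Fin.lt_def] at hij; omega) j.isLt
  have hx1 : ∀ i : Fin k, 1 ≤ (fun i : Fin k => u (i.val + 1)) i := by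
    intro i
    exact hupos (i.val+1) (by omega) i.isLt
  -- the rectangle characterization
  have hABmain : ∀ t : Fin k → ℤ, Cnd (fun i : Fin k => u (i.val + 1))
      (fun i : Fin k => v (i.val + 1)) t ↔
      ∀ i : Fin k, a (i.val+1) ≤ t i ∧ t i ≤ b (i.val+1) := by
    intro t
    constructor
    · rintro ⟨h1, h2⟩ i
      have hik : i.val + 1 ≤ k := i.isLt
      constructor
      · rw [ha _ (by omega) hik]
        split_ifs with hi
        · have := (h1 i).1
          simp only at this
          rw [show i.val + 1 = 1 from hi] at this
          exact this
        · refine max_le (h1 i).1 ?_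
          have hj : i.val - 1 < k := by omega
          have := (h2 ⟨i.val - 1, hj⟩ i (by simp; omega)).2
          simp only at this
          rw [show i.val - 1 + 1 = (i.val + 1) - 1 from by omega] at this
          omega
      · rw [hb _ (by omega) hik]
        split_ifs with hi
        · have := (h1 i).2
          simp only at this
          rw [show i.val + 1 = k from hi] at this
          exact this
        · refine le_min ?_ (h1 i).2
          have hj : i.val + 1 < k := by omega
          have := (h2 i ⟨i.val + 1, hj⟩ rfl).1
          simp only at this
          omega
    · intro h
      constructor
      · intro i
        have hik : i.val + 1 ≤ k := i.isLt
        have h1 := (h i).1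
        have h2 := (h i).2
        rw [ha _ (by omega) hik] at h1
        rw [hb _ (by omega) hik] at h2
        constructor
        · split_ifs at h1 with hi
          · simp only
            rw [show i.val + 1 = 1 from hi]
            exact h1
          · exact le_trans (le_max_left _ _) h1
        · split_ifs at h2 with hi
          · simp only
            rw [show i.val + 1 = k from hi]
            exact h2
          · exact le_trans h2 (min_le_right _ _)
      · intro i j hij
        have hik : i.val + 1 ≤ k := i.isLt
        have hjk : j.val + 1 ≤ k := j.isLt
        have h1 := (h i).2
        rw [hb _ (by omega) hik, if_neg (by omega)] at h1
        have h2 := (h j).1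
        rw [ha _ (by omega) hjk, if_neg (by omega)] at h2
        constructor
        · have := le_trans h1 (min_le_left _ _)
          simp only
          rw [show j.val + 1 = i.val + 1 + 1 from by omega]
          omega
        · have := le_trans (le_max_right _ _) h2
          simp only
          rw [show i.val + 1 = (j.val + 1) - 1 from by omega]
          omega
  -- every interval is nonempty
  have hab : ∀ n, 1 ≤ n → n ≤ k → a n ≤ b n := by
    obtain ⟨π⟩ := hpair
    obtain ⟨t, ht, -⟩ := destructMP _ _ hxmono hymono π
    have h := (hABmain t).1 ht
    intro n h1 h2
    have := h ⟨n - 1, by omega⟩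
    simp only at this
    rw [show n - 1 + 1 = n from by omega] at this
    omega
  have hau : ∀ n, 1 ≤ n → n ≤ k → u n ≤ a n := by
    intro n h1 h2
    rw [ha n h1 h2]
    split_ifs with hn
    · rw [hn]
    · exact le_max_left _ _
  have hbv : ∀ n, 1 ≤ n → n ≤ k → b n ≤ v n := by
    intro n h1 h2
    rw [hb n h1 h2]
    split_ifs with hn
    · rw [hn]
    · exact min_le_right _ _
  have hapos : ∀ n, 1 ≤ n → n ≤ k → 1 ≤ a n := fun n h1 h2 => le_trans (hupos n h1 h2) (hau n h1 h2)
  have hbpos : ∀ n, 1 ≤ n → n ≤ k → 1 ≤ b n := fun n h1 h2 => le_trans (hapos n h1 h2) (hab n h1 h2)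
  -- separation: v (p-1) < u q for 2 ≤ p < q ≤ k
  have hsep : ∀ p q : ℕ, 2 ≤ p → p < q → q ≤ k → v (p-1) < u q := by
    intro p q h2 hpq hqk
    have h3 : v (p-1) + 1 ≤ a p := by
      rw [ha p (by omega) (by omega), if_neg (by omega)]
      exact le_max_right _ _
    have h4 : b p ≤ u (p+1) - 1 := by
      rw [hb p (by omega) (by omega), if_neg (by omega)]
      exact min_le_left _ _
    have h5 := hab p (by omega) (by omega)
    have h6 : u (p+1) ≤ u q := hule (p+1) q (by omega) (by omega) hqk
    omega
  -- type 2 set identity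
  have hT2 : (Finset.Icc (u 1) (v k)).filter (fun c =>
      ¬ (∃ i ∈ Finset.Icc 1 k, (2 ≤ i → v (i - 1) < c) ∧ c < u i) ∧
      ¬ (∃ i ∈ Finset.Icc 1 k, a i ≤ b i ∧ a i ≤ c ∧ c ≤ b i))
      = (Finset.Icc 2 k).biUnion (fun i => Finset.Icc (u i) (v (i-1))) := by
    ext c
    simp only [Finset.mem_filter, Finset.mem_Icc, Finset.mem_biUnion, not_exists, not_and]
    constructor
    · rintro ⟨⟨hc1, hc2⟩, hn0, hn1⟩
      obtain ⟨i0, hi0def⟩ : ∃ i0, Nat.findGreatest (fun i => u i ≤ c) k = i0 := ⟨_, rfl⟩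
      have hi0ge : 1 ≤ i0 := hi0def ▸ Nat.le_findGreatest hk hc1
      have hi0le : i0 ≤ k := hi0def ▸ Nat.findGreatest_le k
      have hi0P : u i0 ≤ c := Nat.findGreatest_of_ne_zero hi0def (by omega)
      have hmax : ∀ j, i0 < j → j ≤ k → c < u j := by
        intro j hj hjk
        have := Nat.findGreatest_is_greatest (P := fun i => u i ≤ c) (n := k)
          (by rw [hi0def]; exact hj) hjk
        omega
      by_cases hcase : 2 ≤ i0 ∧ c ≤ v (i0 - 1)
      · exact ⟨i0, ⟨hcase.1, hi0le⟩, hi0P, hcase.2⟩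
      · exfalso
        apply hn1 i0 ⟨hi0ge, hi0le⟩ (hab i0 hi0ge hi0le) ?_ ?_
        · -- a i0 ≤ c
          rw [ha i0 hi0ge hi0le]
          split_ifs with h1
          · exact hc1
          · have hv0 : ¬ (c ≤ v (i0 - 1)) := fun hcc => hcase ⟨by omega, hcc⟩
            exact max_le hi0P (by omega)
        · -- c ≤ b i0
          rw [hb i0 hi0ge hi0le]
          split_ifs with h1
          · exact hc2
          · refine le_min (by have := hmax (i0+1) (by omega) (by omega); omega) ?_
            by_contra hcc
            push_neg at hcc
            refine hn0 (i0+1) ⟨by omega, by omega⟩ (fun _ => ?_) (hmax (i0+1) (by omega) (by omega))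
            rw [show i0 + 1 - 1 = i0 from by omega]
            exact hcc
    · rintro ⟨i, ⟨hi2, hik⟩, hui, hvi⟩
      have hiv : 1 ≤ i - 1 := by omega
      refine ⟨⟨le_trans (hule 1 i le_rfl (by omega) hik) hui,
        le_trans hvi (hvle (i-1) k hiv (by omega) le_rfl)⟩, ?_, ?_⟩
      · rintro j ⟨hj1, hjk⟩ hj2 hj3
        rcases le_or_gt j i with h | h
        · have := hule j i hj1 h hik; omega
        · have h2j : 2 ≤ j := by omega
          have := hj2 h2j
          have := hvle (i-1) (j-1) hiv (by omega) (by omega)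
          omega
      · rintro j ⟨hj1, hjk⟩ - hj3 hj4
        rcases lt_or_ge j i with h | h
        · have hbj : b j ≤ u (j+1) - 1 := by
            rw [hb j hj1 (by omega), if_neg (by omega)]
            exact min_le_left _ _
          have := hule (j+1) i (by omega) (by omega) hik
          omega
        · have haj : v (j-1) + 1 ≤ a j := by
            rw [ha j hj1 hjk, if_neg (by omega)]
            exact le_max_right _ _
          have := hvle (i-1) (j-1) hiv (by omega) (by omega)
          omega
  -- pairwise disjointness of the type-2 pieces
  have hdisj : (↑(Finset.Icc 2 k) : Set ℕ).PairwiseDisjoint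
      (fun i => Finset.Icc (u i) (v (i-1))) := by
    intro p hp q hq hpq
    simp only [Finset.coe_Icc, Set.mem_Icc] at hp hq
    have key : ∀ p q : ℕ, 2 ≤ p → p < q → q ≤ k →
        Disjoint (Finset.Icc (u p) (v (p-1))) (Finset.Icc (u q) (v (q-1))) := by
      intro p q h2 hpq hqk
      rw [Finset.disjoint_left]
      intro c hc hc2
      rw [Finset.mem_Icc] at hc hc2
      have := hsep p q h2 hpq hqk
      have := hvle (p-1) (q-1) (by omega) (by omega) (by omega)
      omega
    rcases lt_or_gt_of_ne hpq with h | h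
    · exact key p q hp.1 h hq.2
    · exact (key q p hq.1 h hp.2).symm
  rw [hT2, Finset.prod_biUnion hdisj]
  rw [Finset.filter_true_of_mem
    (fun i hi => hab i (Finset.mem_Icc.mp hi).1 (Finset.mem_Icc.mp hi).2)]
  have hsingle1 : ∀ i ∈ Finset.Icc 1 k,
      partFn (fun _ => 1) D (fun _ : Fin 1 => (a i, 2)) (fun _ => (b i, 1))
        = ∑ c ∈ Finset.Icc (a i) (b i), wfun D (a i) (b i) c := by
    intro i hi
    rw [Finset.mem_Icc] at hi
    exact single_partFn D hD _ _ (hapos i hi.1 hi.2)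
  rw [Finset.prod_congr rfl hsingle1]
  have hsingle2 : ∀ i ∈ Finset.Icc 2 k, (∏ c ∈ Finset.Icc (u i) (v (i-1)),
      partFn (fun _ => 1) D (fun _ : Fin 1 => (c, 2)) (fun _ => (c, 1)))
        = ∏ c ∈ Finset.Icc (u i) (v (i-1)), wfun D c c c := by
    intro i hi
    rw [Finset.mem_Icc] at hi
    refine Finset.prod_congr rfl (fun c hc => ?_)
    rw [Finset.mem_Icc] at hc
    have hc1 : 1 ≤ c := le_trans (hupos i (by omega) hi.2) hc.1
    rw [single_partFn D hD c c hc1, Finset.Icc_self, Finset.sum_singleton]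
  rw [Finset.prod_congr rfl hsingle2]
  -- compute the left side
  refine Eq.trans (master k D hD _ _ hxmono hymono hx1
    (fun i => a (i.val+1)) (fun i => b (i.val+1)) hABmain) ?_
  refine Eq.trans (prod_fin_icc k
    (fun n => ∑ c ∈ Finset.Icc (a n) (b n), wfun D (u n) (v n) c)) ?_
  -- the remaining algebra
  have hstep : ∀ n ∈ Finset.Icc 1 k, (∑ c ∈ Finset.Icc (a n) (b n), wfun D (u n) (v n) c)
      = ((D 1 (v n) / D 1 (b n)) * (clo 1 (D 2) (a n - 1) / clo 1 (D 2) (u n - 1)))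
        * ∑ c ∈ Finset.Icc (a n) (b n), wfun D (a n) (b n) c := by
    intro n hn
    rw [Finset.mem_Icc] at hn
    rw [Finset.mul_sum]
    refine Finset.sum_congr rfl (fun c hc => ?_)
    unfold wfun
    have h1 : D 1 (b n) ≠ 0 := ne_of_gt (hD1 _ (hbpos n hn.1 hn.2))
    have h2 : clo 1 (D 2) (a n - 1) ≠ 0 := ne_of_gt (hclo2 _)
    have h3 : clo 1 (D 2) (u n - 1) ≠ 0 := ne_of_gt (hclo2 _)
    have h4 : clo 1 (D 1) (c - 1) ≠ 0 := ne_of_gt (hclo1 _)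
    field_simp
  rw [Finset.prod_congr rfl hstep, Finset.prod_mul_distrib, mul_comm]
  congr 1
  rw [Finset.prod_mul_distrib]
  have e1 : Finset.Icc 1 k = insert k (Finset.Icc 1 (k-1)) := by
    ext n; simp only [Finset.mem_Icc, Finset.mem_insert]; omega
  have e2 : Finset.Icc 1 k = insert 1 (Finset.Icc 2 k) := by
    ext n; simp only [Finset.mem_Icc, Finset.mem_insert]; omega
  have hFprod : ∏ n ∈ Finset.Icc 1 k, (D 1 (v n) / D 1 (b n))
      = ∏ n ∈ Finset.Icc 2 k, (D 1 (v (n-1)) / D 1 (b (n-1))) := by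
    rw [e1, Finset.prod_insert (by simp only [Finset.mem_Icc]; omega)]
    have hk1 : D 1 (v k) / D 1 (b k) = 1 := by
      rw [hb k hk le_rfl, if_pos rfl, div_self (ne_of_gt (hD1 _ (hvpos k hk le_rfl)))]
    rw [hk1, one_mul]
    refine Finset.prod_nbij' (fun n => n+1) (fun n => n-1) ?_ ?_ ?_ ?_ ?_ <;>
        intro m hm <;> simp only [Finset.mem_Icc] at * <;> try omega
    rw [show m + 1 - 1 = m from by omega]
  have hGprod : ∏ n ∈ Finset.Icc 1 k, (clo 1 (D 2) (a n - 1) / clo 1 (D 2) (u n - 1))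
      = ∏ n ∈ Finset.Icc 2 k, (clo 1 (D 2) (a n - 1) / clo 1 (D 2) (u n - 1)) := by
    rw [e2, Finset.prod_insert (by simp only [Finset.mem_Icc]; omega)]
    rw [ha 1 le_rfl hk, if_pos rfl, div_self (ne_of_gt (hclo2 _)), one_mul]
  rw [hFprod, hGprod, ← Finset.prod_mul_distrib]
  refine Finset.prod_congr rfl (fun i hi => ?_)
  rw [Finset.mem_Icc] at hi
  have hui2 : 2 ≤ u i := by
    have := humono 1 i le_rfl (by omega) hi.2; omega
  rcases le_or_gt (u i) (v (i-1)) with hcase | hcase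
  · -- overlapping case
    have hai : a i = v (i-1) + 1 := by
      rw [ha i (by omega) hi.2, if_neg (by omega)]
      exact max_eq_right (by omega)
    have hbi : b (i-1) = u i - 1 := by
      rw [hb (i-1) (by omega) (by omega), if_neg (by omega), show i - 1 + 1 = i from by omega]
      exact min_eq_left (by omega)
    have hconv : ∀ c ∈ Finset.Icc (u i) (v (i-1)), wfun D c c c
        = (fun z => clo 1 (D 2) z * clo 1 (D 1) z) c
          / (fun z => clo 1 (D 2) z * clo 1 (D 1) z) (c-1) := by
      intro c hc
      rw [Finset.mem_Icc] at hc
      have hc1 : 1 ≤ c := by omega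
      simp only
      rw [clo_eq (D 2) c hc1, clo_eq (D 1) c hc1]
      rfl
    rw [Finset.prod_congr rfl hconv,
      tele2 _ (fun z => ne_of_gt (mul_pos (hclo2 z) (hclo1 z))) (u i) (v (i-1)) (by omega)]
    rw [hai, hbi, show v (i-1) + 1 - 1 = v (i-1) from by ring]
    rw [clo_eq (D 1) (v (i-1)) (by omega), clo_eq (D 1) (u i - 1) (by omega)]
    have h1 : D 1 (v (i-1)) ≠ 0 := ne_of_gt (hD1 _ (by omega))
    have h2 : D 1 (u i - 1) ≠ 0 := ne_of_gt (hD1 _ (by omega))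
    have h3 : clo 1 (D 2) (v (i-1)) ≠ 0 := ne_of_gt (hclo2 _)
    have h4 : clo 1 (D 2) (u i - 1) ≠ 0 := ne_of_gt (hclo2 _)
    field_simp
  · -- gap case
    have hai : a i = u i := by
      rw [ha i (by omega) hi.2, if_neg (by omega)]
      exact max_eq_left (by omega)
    have hbi : b (i-1) = v (i-1) := by
      rw [hb (i-1) (by omega) (by omega), if_neg (by omega), show i - 1 + 1 = i from by omega]
      exact min_eq_right (by omega)
    rw [Finset.Icc_eq_empty (by omega), Finset.prod_empty, hai, hbi,
      div_self (ne_of_gt (hD1 _ (hvpos (i-1) (by omega) (by omega)))),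
      div_self (ne_of_gt (hclo2 _)), one_mul]
end

section
/- Let n ≥ 2 and D = (D_1,…,D_n) with D_i : ℤ_{≥1} → (0,∞) (convention D_i(0) = 1), and let D̃ = 𝒲D, so D̃_i : ℤ_{≥i} → (0,∞) (convention D̃_i(i−1) = 1). Then the matrix identity H_1(D_n)·H_1(D_{n−1})⋯H_1(D_1) = H_n(D̃_n)·H_{n−1}(D̃_{n−1})⋯H_1(D̃_1) holds entrywise, where all matrix products are well defined since each entry is a finite sum. -/
open scoped BigOperators

/-- The sum `Σ_{m=r}^{x} g(m)/f(m−1)` with the convention `f(r−1) = 1`. -/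
noncomputable def pitSum (r : ℤ) (f g : ℤ → ℝ) (x : ℤ) : ℝ :=
  ∑ m ∈ Finset.Icc r x, g m / clo r f (m - 1)

/-- `(g ⊙ f)(x) = f(x) · Σ_{m=r}^{x} g(m)/f(m−1)`, for `f, g : ℤ_{≥r} → (0,∞)`. -/
noncomputable def odot (r : ℤ) (g f : ℤ → ℝ) : ℤ → ℝ := fun x => f x * pitSum r f g x

/-- `(f ⊗ g)(x) = g(x) · (Σ_{m=r}^{x} g(m)/f(m−1))⁻¹`, for `f, g : ℤ_{≥r} → (0,∞)`. -/
noncomputable def otimes (r : ℤ) (f g : ℤ → ℝ) : ℤ → ℝ := fun x => g x * (pitSum r f g x)⁻¹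

/-- The operator `𝒯_{r,m}`: replaces `(D_m, D_{m+1})` by `(D_{m+1}⊙D_m, D_m⊗D_{m+1})`
and leaves the other entries unchanged. -/
noncomputable def Tro (r m : ℤ) (D : ℤ → ℤ → ℝ) : ℤ → ℤ → ℝ :=
  fun i => if i = m then odot r (D (m + 1)) (D m)
    else if i = m + 1 then otimes r (D m) (D (m + 1))
    else D i

/-- The operator `𝒮_r` for an `n`-tuple: `𝒮_r = 𝒯_{r,r}𝒯_{r,r+1}⋯𝒯_{r,n−1}`,
the rightmost operator `𝒯_{r,n−1}` applied first. -/
noncomputable def Sop (n r : ℕ) (D : ℤ → ℤ → ℝ) : ℤ → ℤ → ℝ :=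
  ((List.range (n - r)).map (fun j => ((n - 1 - j : ℕ) : ℤ))).foldl
    (fun E m => Tro (r : ℤ) m E) D

/-- The operator `𝒲 = 𝒮_{n−1}𝒮_{n−2}⋯𝒮_1` (rightmost applied first). -/
noncomputable def Wop (n : ℕ) (D : ℤ → ℤ → ℝ) : ℤ → ℤ → ℝ :=
  ((List.range (n - 1)).map (fun j => j + 1)).foldl (fun E r => Sop n r E) D

/-- The matrix `H_r(E)`: `H_r(E)(i,j) = 1` if `i = j < r`; `e_i e_{i+1} ⋯ e_j` if
`r ≤ i ≤ j` where `e_x = E(x)/E(x−1)` (convention `E(r−1) = 1`); and `0` otherwise. -/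
noncomputable def Hmat (r : ℤ) (E : ℤ → ℝ) : ℤ → ℤ → ℝ :=
  fun i j =>
    if i = j ∧ j < r then 1
    else if r ≤ i ∧ i ≤ j then ∏ x ∈ Finset.Icc i j, E x / clo r E (x - 1)
    else 0

/-- Entrywise matrix product; each sum has finitely many non-zero terms for the
matrices considered here. -/
noncomputable def matMul (A B : ℤ → ℤ → ℝ) : ℤ → ℤ → ℝ :=
  fun i j => ∑' k : ℤ, A i k * B k j

/-- Product of a list of matrices (leftmost factor first). -/
noncomputable def matProd : List (ℤ → ℤ → ℝ) → ℤ → ℤ → ℝ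
  | [] => fun i j => if i = j then 1 else 0
  | A :: L => matMul A (matProd L)

/-! ### basic helpers -/

lemma clo_pos_s8 {r : ℤ} {f : ℤ → ℝ} (h : ∀ x, r ≤ x → 0 < f x) (y : ℤ) : 0 < clo r f y := by
  unfold clo; split
  · exact one_pos
  · exact h y (by omega)

lemma icc_succ_top {a b : ℤ} (h : a ≤ b) (φ : ℤ → ℝ) :
    ∑ k ∈ Finset.Icc a b, φ k = ∑ k ∈ Finset.Icc a (b - 1), φ k + φ b := by
  have : Finset.Icc a b = insert b (Finset.Icc a (b - 1)) := by
    ext x; simp only [Finset.mem_Icc, Finset.mem_insert]; omega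
  rw [this, Finset.sum_insert (by simp only [Finset.mem_Icc]; omega), add_comm]

lemma pitSum_pos {r : ℤ} {f g : ℤ → ℝ} (hf : ∀ x, r ≤ x → 0 < f x)
    (hg : ∀ x, r ≤ x → 0 < g x) {x : ℤ} (hx : r ≤ x) : 0 < pitSum r f g x := by
  unfold pitSum
  apply Finset.sum_pos
  · intro m hm
    simp only [Finset.mem_Icc] at hm
    exact div_pos (hg m hm.1) (clo_pos_s8 hf _)
  · exact ⟨x, by simp only [Finset.mem_Icc]; omega⟩

lemma pitSum_succ {r : ℤ} (f g : ℤ → ℝ) {x : ℤ} (hx : r ≤ x) :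
    pitSum r f g x = pitSum r f g (x - 1) + g x / clo r f (x - 1) := by
  unfold pitSum; exact icc_succ_top hx _

lemma pitSum_neg {r : ℤ} (f g : ℤ → ℝ) {x : ℤ} (hx : x < r) : pitSum r f g x = 0 := by
  unfold pitSum
  rw [Finset.Icc_eq_empty (by omega), Finset.sum_empty]

/-- closed form of `Hmat` in the nontrivial range. -/
lemma Hmat_eq {r : ℤ} {E : ℤ → ℝ} (hE : ∀ x, r ≤ x → 0 < E x) {i j : ℤ}
    (hri : r ≤ i) (hij : i ≤ j) : Hmat r E i j = E j / clo r E (i - 1) := by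
  unfold Hmat
  rw [if_neg (by omega), if_pos ⟨hri, hij⟩]
  obtain ⟨t, rfl⟩ : ∃ t : ℕ, j = i + t := ⟨(j - i).toNat, by omega⟩
  clear hij
  induction t with
  | zero =>
    simp only [Nat.cast_zero, add_zero, Finset.Icc_self, Finset.prod_singleton]
  | succ m ih =>
    have h1 : Finset.Icc i (i + (m + 1 : ℕ)) = insert (i + m + 1) (Finset.Icc i (i + m)) := by
      ext x; simp only [Finset.mem_Icc, Finset.mem_insert]; push_cast; omega
    rw [h1, Finset.prod_insert (by simp only [Finset.mem_Icc]; omega), ih]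
    have h2 : clo r E (i + m + 1 - 1) = E (i + m) := by
      unfold clo; rw [if_neg (by omega)]; ring_nf
    have h3 : (i + (m + 1 : ℕ)) = i + m + 1 := by push_cast; ring
    rw [h2, h3]
    have hEm : E (i + m) ≠ 0 := ne_of_gt (hE _ (by omega))
    have hcl : clo r E (i - 1) ≠ 0 := ne_of_gt (clo_pos_s8 hE _)
    field_simp

/-! ### upper triangular matrices -/

def UT (A : ℤ → ℤ → ℝ) : Prop := ∀ i j, A i j ≠ 0 → i ≤ j

lemma Hmat_ut (r : ℤ) (E : ℤ → ℝ) : UT (Hmat r E) := by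
  intro i j h
  unfold Hmat at h
  by_contra hij
  rw [if_neg (by omega), if_neg (by omega)] at h
  exact h rfl

lemma matMul_eq_sum {A B : ℤ → ℤ → ℝ} (hA : UT A) (hB : UT B) (i j : ℤ) :
    matMul A B i j = ∑ k ∈ Finset.Icc i j, A i k * B k j := by
  unfold matMul
  apply tsum_eq_sum
  intro k hk
  simp only [Finset.mem_Icc, not_and_or, not_le] at hk
  rcases hk with hk | hk
  · rcases eq_or_ne (A i k) 0 with h | h
    · rw [h, zero_mul]
    · exact absurd (hA i k h) (by omega)
  · rcases eq_or_ne (B k j) 0 with h | h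
    · rw [h, mul_zero]
    · exact absurd (hB k j h) (by omega)

lemma matMul_ut {A B : ℤ → ℤ → ℝ} (hA : UT A) (hB : UT B) : UT (matMul A B) := by
  intro i j h
  by_contra hij
  rw [matMul_eq_sum hA hB, Finset.Icc_eq_empty (by omega), Finset.sum_empty] at h
  exact h rfl

lemma matMul_assoc {A B C : ℤ → ℤ → ℝ} (hA : UT A) (hB : UT B) (hC : UT C) :
    ∀ i j, matMul (matMul A B) C i j = matMul A (matMul B C) i j := by
  intro i j
  rw [matMul_eq_sum (matMul_ut hA hB) hC, matMul_eq_sum hA (matMul_ut hB hC)]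
  have hL : ∀ l ∈ Finset.Icc i j, matMul A B i l * C l j
      = ∑ k ∈ Finset.Icc i j, A i k * B k l * C l j := by
    intro l hl
    simp only [Finset.mem_Icc] at hl
    rw [matMul_eq_sum hA hB, Finset.sum_mul]
    apply Finset.sum_subset (Finset.Icc_subset_Icc le_rfl hl.2)
    intro k hk hk'
    simp only [Finset.mem_Icc] at hk hk'
    have : B k l = 0 := by
      by_contra h; exact absurd (hB k l h) (by omega)
    rw [this, mul_zero, zero_mul]
  have hR : ∀ k ∈ Finset.Icc i j, A i k * matMul B C k j
      = ∑ l ∈ Finset.Icc i j, A i k * B k l * C l j := by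
    intro k hk
    simp only [Finset.mem_Icc] at hk
    rw [matMul_eq_sum hB hC, Finset.mul_sum]
    rw [← Finset.sum_subset (Finset.Icc_subset_Icc hk.1 le_rfl)]
    · exact Finset.sum_congr rfl fun l _ => by ring
    intro l hl hl'
    simp only [Finset.mem_Icc] at hl hl'
    have : B k l = 0 := by
      by_contra h; exact absurd (hB k l h) (by omega)
    rw [this, mul_zero, zero_mul]
  rw [Finset.sum_congr rfl hL, Finset.sum_congr rfl hR, Finset.sum_comm]

lemma matProd_ut {L : List (ℤ → ℤ → ℝ)} (h : ∀ A ∈ L, UT A) : UT (matProd L) := by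
  induction L with
  | nil =>
    intro i j hij
    unfold matProd at hij
    by_contra h'
    rw [if_neg (by omega)] at hij
    exact hij rfl
  | cons A L ih =>
    exact matMul_ut (h A (by simp)) (ih fun B hB => h B (by simp [hB]))

lemma matMul_one {A : ℤ → ℤ → ℝ} : ∀ i j, matMul A (matProd []) i j = A i j := by
  intro i j
  unfold matMul matProd
  rw [tsum_eq_single j]
  · simp
  · intro k hk
    rw [if_neg (by omega), mul_zero]

lemma matProd_append {L1 L2 : List (ℤ → ℤ → ℝ)} (h1 : ∀ A ∈ L1, UT A)
    (h2 : ∀ A ∈ L2, UT A) :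
    ∀ i j, matProd (L1 ++ L2) i j = matMul (matProd L1) (matProd L2) i j := by
  induction L1 with
  | nil =>
    intro i j
    simp only [List.nil_append]
    unfold matMul
    rw [tsum_eq_single i]
    · unfold matProd; simp
    · intro k hk
      unfold matProd
      rw [if_neg (by omega), zero_mul]
  | cons A L ih =>
    intro i j
    have hL : ∀ B ∈ L, UT B := fun B hB => h1 B (by simp [hB])
    have hA : UT A := h1 A (by simp)
    simp only [List.cons_append]
    show matMul A (matProd (L ++ L2)) i j = matMul (matMul A (matProd L)) (matProd L2) i j
    rw [matMul_assoc hA (matProd_ut hL) (matProd_ut h2)]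
    show (∑' k, A i k * matProd (L ++ L2) k j) = ∑' k, A i k * matMul (matProd L) (matProd L2) k j
    exact tsum_congr fun k => by rw [ih hL k j]

/-! ### the local two-matrix identity -/

lemma telescope (phi : ℤ → ℝ) {i j : ℤ} (h : i ≤ j) :
    ∑ k ∈ Finset.Icc i j, (phi (k - 1) - phi k) = phi (i - 1) - phi j := by
  obtain ⟨t, rfl⟩ : ∃ t : ℕ, j = i + t := ⟨(j - i).toNat, by omega⟩
  clear h
  induction t with
  | zero => simp
  | succ m ih =>
    have h1 : Finset.Icc i (i + (m + 1 : ℕ)) = insert (i + m + 1) (Finset.Icc i (i + m)) := by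
      ext x; simp only [Finset.mem_Icc, Finset.mem_insert]; push_cast; omega
    rw [h1, Finset.sum_insert (by simp only [Finset.mem_Icc]; omega), ih]
    have e1 : (i + m + 1 - 1 : ℤ) = i + (m : ℕ) := by push_cast; ring
    rw [e1]
    have e2 : (i + ((m : ℕ) + 1 : ℕ) : ℤ) = i + m + 1 := by push_cast; ring
    rw [e2]
    ring

lemma pitSum_sub {r : ℤ} (f g : ℤ → ℝ) {i j : ℤ} (h1 : r ≤ i) (h2 : i - 1 ≤ j) :
    ∑ k ∈ Finset.Icc i j, g k / clo r f (k - 1)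
      = pitSum r f g j - pitSum r f g (i - 1) := by
  have hsplit : Finset.Icc r j = Finset.Icc r (i - 1) ∪ Finset.Icc i j := by
    ext x; simp only [Finset.mem_Icc, Finset.mem_union]; omega
  have hdisj : Disjoint (Finset.Icc r (i - 1)) (Finset.Icc i j) := by
    rw [Finset.disjoint_left]
    intro x hx hx'
    simp only [Finset.mem_Icc] at hx hx'
    omega
  unfold pitSum
  rw [hsplit, Finset.sum_union hdisj]
  ring

lemma key_local (r : ℤ) (f g : ℤ → ℝ) (hf : ∀ x, r ≤ x → 0 < f x)
    (hg : ∀ x, r ≤ x → 0 < g x) :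
    ∀ i j, matMul (Hmat r g) (Hmat r f) i j
      = matMul (Hmat (r + 1) (otimes r f g)) (Hmat r (odot r g f)) i j := by
  intro i j
  set S := pitSum r f g with hS
  have hSpos : ∀ x, r ≤ x → 0 < S x := fun x hx => pitSum_pos hf hg hx
  have ha : ∀ x, r ≤ x → 0 < odot r g f x := fun x hx =>
    mul_pos (hf x hx) (hSpos x hx)
  have hb : ∀ x, r ≤ x → 0 < otimes r f g x := fun x hx =>
    mul_pos (hg x hx) (inv_pos.mpr (hSpos x hx))
  have hb' : ∀ x, r + 1 ≤ x → 0 < otimes r f g x := fun x hx => hb x (by omega)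
  rw [matMul_eq_sum (Hmat_ut _ _) (Hmat_ut _ _), matMul_eq_sum (Hmat_ut _ _) (Hmat_ut _ _)]
  rcases lt_or_ge j i with hij | hij
  · rw [Finset.Icc_eq_empty (by omega)]
    simp
  rcases lt_or_ge j r with hjr | hjr
  · -- j < r : both sides are `if i = j then 1 else 0`
    have hfjj : Hmat r f j j = 1 := by unfold Hmat; rw [if_pos ⟨rfl, hjr⟩]
    have hajj : Hmat r (odot r g f) j j = 1 := by unfold Hmat; rw [if_pos ⟨rfl, hjr⟩]
    rw [Finset.sum_eq_single j, Finset.sum_eq_single j]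
    · rw [hfjj, hajj, mul_one, mul_one]
      unfold Hmat
      rcases eq_or_ne i j with h | h
      · rw [if_pos ⟨h, hjr⟩, if_pos ⟨h, by omega⟩]
      · rw [if_neg (by tauto), if_neg (by omega), if_neg (by tauto), if_neg (by omega)]
    · intro k hk hkj
      simp only [Finset.mem_Icc] at hk
      have hz : Hmat r (odot r g f) k j = 0 := by
        unfold Hmat; rw [if_neg (by tauto), if_neg (by omega)]
      rw [hz, mul_zero]
    · intro h; exact absurd (Finset.mem_Icc.mpr ⟨hij, le_rfl⟩) h
    · intro k hk hkj
      simp only [Finset.mem_Icc] at hk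
      have hz : Hmat r f k j = 0 := by
        unfold Hmat; rw [if_neg (by tauto), if_neg (by omega)]
      rw [hz, mul_zero]
    · intro h; exact absurd (Finset.mem_Icc.mpr ⟨hij, le_rfl⟩) h
  rcases lt_or_ge i r with hir | hri
  · -- i < r ≤ j : both sides vanish
    rw [Finset.sum_eq_zero, Finset.sum_eq_zero]
    · intro k hk
      rcases eq_or_ne k i with rfl | h
      · have hz : Hmat r (odot r g f) k j = 0 := by
          unfold Hmat; rw [if_neg (by omega), if_neg (by omega)]
        rw [hz, mul_zero]
      · have hz : Hmat (r + 1) (otimes r f g) i k = 0 := by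
          unfold Hmat; rw [if_neg (by tauto), if_neg (by omega)]
        rw [hz, zero_mul]
    · intro k hk
      rcases eq_or_ne k i with rfl | h
      · have hz : Hmat r f k j = 0 := by
          unfold Hmat; rw [if_neg (by omega), if_neg (by omega)]
        rw [hz, mul_zero]
      · have hz : Hmat r g i k = 0 := by
          unfold Hmat; rw [if_neg (by tauto), if_neg (by omega)]
        rw [hz, zero_mul]
  -- main case : r ≤ i ≤ j
  have hLHS : ∑ k ∈ Finset.Icc i j, Hmat r g i k * Hmat r f k j
      = (f j / clo r g (i - 1)) * (S j - S (i - 1)) := by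
    rw [hS, ← pitSum_sub f g hri (by omega), Finset.mul_sum]
    apply Finset.sum_congr rfl
    intro k hk
    simp only [Finset.mem_Icc] at hk
    rw [Hmat_eq hg hri hk.1, Hmat_eq hf (by omega) hk.2]
    ring
  rw [hLHS]
  rcases eq_or_lt_of_le hri with rfl | hri'
  · -- i = r
    rw [Finset.sum_eq_single r]
    · have h1 : Hmat (r + 1) (otimes r f g) r r = 1 := by
        unfold Hmat; rw [if_pos ⟨rfl, by omega⟩]
      rw [h1, one_mul, Hmat_eq ha le_rfl hij]
      have h2 : clo r (odot r g f) (r - 1) = 1 := by unfold clo; rw [if_pos (by omega)]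
      have h3 : clo r g (r - 1) = 1 := by unfold clo; rw [if_pos (by omega)]
      rw [h2, h3, hS, pitSum_neg f g (show (r:ℤ) - 1 < r by omega)]
      show f j / 1 * (pitSum r f g j - 0) = odot r g f j / 1
      unfold odot
      ring
    · intro k hk hki
      simp only [Finset.mem_Icc] at hk
      have hz : Hmat (r + 1) (otimes r f g) r k = 0 := by
        unfold Hmat; rw [if_neg (by tauto), if_neg (by omega)]
      rw [hz, zero_mul]
    · intro h; exact absurd (Finset.mem_Icc.mpr ⟨le_rfl, hij⟩) h
  · -- r + 1 ≤ i
    have hri1 : r + 1 ≤ i := by omega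
    have hterm : ∀ k ∈ Finset.Icc i j,
        Hmat (r + 1) (otimes r f g) i k * Hmat r (odot r g f) k j
        = (odot r g f j / clo (r + 1) (otimes r f g) (i - 1))
            * ((S (k - 1))⁻¹ - (S k)⁻¹) := by
      intro k hk
      simp only [Finset.mem_Icc] at hk
      have hk1 : r + 1 ≤ k := by omega
      rw [Hmat_eq hb' hri1 hk.1, Hmat_eq ha (by omega) hk.2]
      have hca : clo r (odot r g f) (k - 1) = f (k - 1) * S (k - 1) := by
        unfold clo odot; rw [if_neg (by omega)]
      rw [hca]
      show otimes r f g k / clo (r + 1) (otimes r f g) (i - 1)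
          * (odot r g f j / (f (k - 1) * S (k - 1)))
        = odot r g f j / clo (r + 1) (otimes r f g) (i - 1) * ((S (k - 1))⁻¹ - (S k)⁻¹)
      have hot : otimes r f g k = g k * (S k)⁻¹ := rfl
      have hrec : S k = S (k - 1) + g k / f (k - 1) := by
        rw [hS, pitSum_succ f g (by omega)]
        have hc : clo r f (k - 1) = f (k - 1) := by unfold clo; rw [if_neg (by omega)]
        rw [hc]
      have h1 : (0:ℝ) < S (k - 1) := hSpos _ (by omega)
      have h2 : (0:ℝ) < S k := hSpos _ (by omega)
      have h3 : (0:ℝ) < f (k - 1) := hf _ (by omega)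
      have hgk : g k = (S k - S (k - 1)) * f (k - 1) := by
        rw [hrec]; field_simp; ring
      rw [hot, hgk]
      have hcb0 : (0:ℝ) < clo (r + 1) (otimes r f g) (i - 1) := clo_pos_s8 hb' _
      field_simp
    rw [Finset.sum_congr rfl hterm, ← Finset.mul_sum,
      telescope (fun x => (S x)⁻¹) hij]
    have hgi : clo r g (i - 1) = g (i - 1) := by unfold clo; rw [if_neg (by omega)]
    have hSi : (0:ℝ) < S (i - 1) := hSpos _ (by omega)
    have hSj : (0:ℝ) < S j := hSpos _ (by omega)
    have hgi' : (0:ℝ) < g (i - 1) := hg _ (by omega)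
    have hfj : (0:ℝ) < f j := hf _ (by omega)
    have hodj : odot r g f j = f j * S j := rfl
    rcases eq_or_lt_of_le hri1 with h | h
    · -- i = r + 1
      have hcb : clo (r + 1) (otimes r f g) (i - 1) = 1 := by
        unfold clo; rw [if_pos (by omega)]
      have hSr : S (i - 1) = g (i - 1) := by
        rw [hS]
        unfold pitSum
        have hsing : Finset.Icc r (i - 1) = {r} := by
          ext x; simp only [Finset.mem_Icc, Finset.mem_singleton]; omega
        rw [hsing, Finset.sum_singleton]
        have h1 : clo r f (r - 1) = 1 := by unfold clo; rw [if_pos (by omega)]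
        have h2 : (i - 1 : ℤ) = r := by omega
        rw [h1, h2, div_one]
      rw [hcb, hgi, hodj]
      rw [← hSr] at hgi' ⊢
      show f j / S (i - 1) * (S j - S (i - 1))
        = f j * S j / 1 * ((fun x => (S x)⁻¹) (i - 1) - (fun x => (S x)⁻¹) j)
      simp only
      field_simp
    · -- r + 1 < i
      have hcb : clo (r + 1) (otimes r f g) (i - 1)
          = g (i - 1) * (S (i - 1))⁻¹ := by
        unfold clo otimes; rw [if_neg (by omega)]
      rw [hcb, hgi, hodj]
      show f j / g (i - 1) * (S j - S (i - 1))
        = f j * S j / (g (i - 1) * (S (i - 1))⁻¹)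
            * ((fun x => (S x)⁻¹) (i - 1) - (fun x => (S x)⁻¹) j)
      simp only
      field_simp

/-! ### list surgery -/

lemma matMul_congr {A A' B B' : ℤ → ℤ → ℝ} (hA : ∀ i j, A i j = A' i j)
    (hB : ∀ i j, B i j = B' i j) : ∀ i j, matMul A B i j = matMul A' B' i j :=
  fun i j => tsum_congr fun k => by rw [hA, hB]

lemma swap_pair {X Y X' Y' : ℤ → ℤ → ℝ} (hX : UT X) (hY : UT Y) (hX' : UT X')
    (hY' : UT Y') (hkey : ∀ i j, matMul X Y i j = matMul X' Y' i j)
    {L1 L2 : List (ℤ → ℤ → ℝ)} (h1 : ∀ A ∈ L1, UT A) (h2 : ∀ A ∈ L2, UT A) :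
    ∀ i j, matProd (L1 ++ X :: Y :: L2) i j = matProd (L1 ++ X' :: Y' :: L2) i j := by
  have hinner : ∀ i j, matProd (X :: Y :: L2) i j = matProd (X' :: Y' :: L2) i j := by
    intro i j
    show matMul X (matMul Y (matProd L2)) i j = matMul X' (matMul Y' (matProd L2)) i j
    rw [← matMul_assoc hX hY (matProd_ut h2), ← matMul_assoc hX' hY' (matProd_ut h2)]
    exact matMul_congr hkey (fun _ _ => rfl) i j
  intro i j
  have hc2 : ∀ A ∈ X :: Y :: L2, UT A := by
    intro A hA
    simp only [List.mem_cons] at hA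
    rcases hA with rfl | rfl | hA
    · exact hX
    · exact hY
    · exact h2 A hA
  have hc2' : ∀ A ∈ X' :: Y' :: L2, UT A := by
    intro A hA
    simp only [List.mem_cons] at hA
    rcases hA with rfl | rfl | hA
    · exact hX'
    · exact hY'
    · exact h2 A hA
  rw [matProd_append h1 hc2, matProd_append h1 hc2']
  exact matMul_congr (fun _ _ => rfl) hinner i j

lemma range_split (n a0 k : ℕ) (h : n = a0 + 2 + k) :
    List.range n = List.range a0 ++ a0 :: (a0 + 1) ::
      (List.range k).map (fun x => a0 + 2 + x) := by
  subst h
  rw [List.range_add, List.range_add]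
  have h2 : List.range 2 = [0, 1] := rfl
  simp [h2, List.append_assoc]

/-! ### the list of H-matrices and the step lemma -/

lemma flatMap_cast (l : List ℕ) : (l.flatMap fun a => [(a : ℤ)]) = l.map (fun a : ℕ => (a : ℤ)) := by
  induction l with
  | nil => rfl
  | cons x l ih => simp_all

lemma coe_map_eq {α : Type*} (n : ℕ) (G : ℤ → α) :
    (List.range n).map (fun a => G ((n : ℤ) - a))
      = (List.range n).map (fun a : ℕ => G ((n : ℤ) - (a : ℤ))) := by
  simp [flatMap_cast, List.map_map]
  generalize List.range n = l
  induction l with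
  | nil => rfl
  | cons x l ih => simp_all

noncomputable def HL (n : ℕ) (β : ℤ → ℤ) (E : ℤ → ℤ → ℝ) : List (ℤ → ℤ → ℝ) :=
  (List.range n).map (fun a : ℕ => Hmat (β ((n : ℤ) - (a : ℤ))) (E ((n : ℤ) - (a : ℤ))))

def POSn (n : ℕ) (β : ℤ → ℤ) (E : ℤ → ℤ → ℝ) : Prop :=
  ∀ i : ℤ, 1 ≤ i → i ≤ (n : ℤ) → ∀ x : ℤ, β i ≤ x → 0 < E i x

lemma HL_eq {n : ℕ} {β β' : ℤ → ℤ} {E E' : ℤ → ℤ → ℝ}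
    (h : ∀ i : ℤ, 1 ≤ i → i ≤ (n : ℤ) → β i = β' i ∧ E i = E' i) :
    HL n β E = HL n β' E' := by
  unfold HL
  apply List.map_congr_left (l := List.range n)
  intro a ha
  rw [List.mem_range] at ha
  have h1 : 1 ≤ (n : ℤ) - a := by omega
  have h2 : (n : ℤ) - a ≤ (n : ℤ) := by omega
  rw [(h _ h1 h2).1, (h _ h1 h2).2]

lemma HL_ut {n : ℕ} {β : ℤ → ℤ} {E : ℤ → ℤ → ℝ} : ∀ A ∈ HL n β E, UT A := by
  intro A hA
  unfold HL at hA
  rw [List.mem_map] at hA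
  obtain ⟨a, _, rfl⟩ := hA
  exact Hmat_ut _ _

lemma step_lemma (n : ℕ) (r : ℤ) (m : ℕ) (hr : 1 ≤ r) (hm : r ≤ (m : ℤ))
    (hmn : m + 1 ≤ n) (β β' : ℤ → ℤ) (E : ℤ → ℤ → ℝ)
    (hβm : β m = r) (hβm1 : β ((m : ℤ) + 1) = r)
    (hβ'm : β' m = r) (hβ'm1 : β' ((m : ℤ) + 1) = r + 1)
    (hag : ∀ i : ℤ, 1 ≤ i → i ≤ (n : ℤ) → i ≠ (m : ℤ) → i ≠ (m : ℤ) + 1 → β' i = β i)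
    (hpos : POSn n β E) :
    (∀ i j, matProd (HL n β' (Tro r m E)) i j = matProd (HL n β E) i j) ∧
      POSn n β' (Tro r m E) := by
  set f := E m with hfdef
  set g := E ((m : ℤ) + 1) with hgdef
  have hf : ∀ x, r ≤ x → 0 < f x := fun x hx =>
    hpos m (by omega) (by omega) x (by rw [hβm]; exact hx)
  have hg : ∀ x, r ≤ x → 0 < g x := fun x hx =>
    hpos ((m : ℤ) + 1) (by omega) (by omega) x (by rw [hβm1]; exact hx)
  have hE'm : Tro r m E m = odot r g f := by
    unfold Tro; rw [if_pos rfl]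
  have hE'm1 : Tro r m E ((m : ℤ) + 1) = otimes r f g := by
    unfold Tro; rw [if_neg (by omega), if_pos rfl]
  have hE'o : ∀ i : ℤ, i ≠ (m : ℤ) → i ≠ (m : ℤ) + 1 → Tro r m E i = E i := by
    intro i h1 h2; unfold Tro; rw [if_neg h1, if_neg h2]
  constructor
  · -- matProd equality
    set a0 : ℕ := n - m - 1 with ha0
    have hsplit := range_split n a0 (m - 1) (by omega)
    have hc0 : ((n : ℤ) - (a0 : ℕ)) = (m : ℤ) + 1 := by push_cast; omega
    have hc1 : ((n : ℤ) - ((a0 : ℕ) + 1 : ℕ)) = (m : ℤ) := by push_cast; omega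
    have e1 : HL n β' (Tro r m E) =
        ((List.range a0).map (fun a : ℕ => Hmat (β ((n : ℤ) - a)) (E ((n : ℤ) - a))))
        ++ Hmat (r + 1) (otimes r f g) :: Hmat r (odot r g f) ::
          ((List.range (m - 1)).map (fun x : ℕ =>
            Hmat (β ((n : ℤ) - ((a0 + 2 + x : ℕ) : ℤ))) (E ((n : ℤ) - ((a0 + 2 + x : ℕ) : ℤ))))) := by
      unfold HL
      rw [hsplit, List.map_append, List.map_cons, List.map_cons, List.map_map]
      congr 1
      · apply List.map_congr_left (l := List.range a0)
        intro a ha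
        rw [List.mem_range] at ha
        have hne1 : (n : ℤ) - (a : ℕ) ≠ (m : ℤ) := by omega
        have hne2 : (n : ℤ) - (a : ℕ) ≠ (m : ℤ) + 1 := by omega
        rw [hE'o _ hne1 hne2, hag _ (by omega) (by omega) hne1 hne2]
      congr 1
      · rw [hc0, hβ'm1, hE'm1]
      congr 1
      · rw [hc1, hβ'm, hE'm]
      · apply List.map_congr_left (l := List.range (m - 1))
        intro x hx
        rw [List.mem_range] at hx
        simp only [Function.comp_apply]
        have hne1 : (n : ℤ) - ((a0 + 2 + x : ℕ) : ℤ) ≠ (m : ℤ) := by push_cast; omega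
        have hne2 : (n : ℤ) - ((a0 + 2 + x : ℕ) : ℤ) ≠ (m : ℤ) + 1 := by push_cast; omega
        rw [hE'o _ hne1 hne2, hag _ (by push_cast; omega) (by push_cast; omega) hne1 hne2]
    have e2 : HL n β E =
        ((List.range a0).map (fun a : ℕ => Hmat (β ((n : ℤ) - a)) (E ((n : ℤ) - a))))
        ++ Hmat r g :: Hmat r f ::
          ((List.range (m - 1)).map (fun x : ℕ =>
            Hmat (β ((n : ℤ) - ((a0 + 2 + x : ℕ) : ℤ))) (E ((n : ℤ) - ((a0 + 2 + x : ℕ) : ℤ))))) := by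
      unfold HL
      rw [hsplit, List.map_append, List.map_cons, List.map_cons, List.map_map]
      congr 1
      congr 1
      · rw [hc0, hβm1]
      congr 1
      · rw [hc1, hβm]
    intro i j
    rw [e1, e2]
    have hUT1 : ∀ A ∈ ((List.range a0).map
        (fun a : ℕ => Hmat (β ((n : ℤ) - a)) (E ((n : ℤ) - a)))), UT A := by
      intro A hA; rw [List.mem_map] at hA; obtain ⟨a, _, rfl⟩ := hA; exact Hmat_ut _ _
    have hUT2 : ∀ A ∈ ((List.range (m - 1)).map (fun x : ℕ =>
        Hmat (β ((n : ℤ) - ((a0 + 2 + x : ℕ) : ℤ))) (E ((n : ℤ) - ((a0 + 2 + x : ℕ) : ℤ))))), UT A := by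
      intro A hA; rw [List.mem_map] at hA; obtain ⟨a, _, rfl⟩ := hA; exact Hmat_ut _ _
    exact swap_pair (Hmat_ut _ _) (Hmat_ut _ _) (Hmat_ut _ _) (Hmat_ut _ _)
      (fun i j => (key_local r f g hf hg i j).symm) hUT1 hUT2 i j
  · -- positivity
    intro i h1 h2 x hx
    rcases eq_or_ne i (m : ℤ) with rfl | hne1
    · rw [hE'm]
      rw [hβ'm] at hx
      exact mul_pos (hf x hx) (pitSum_pos hf hg hx)
    rcases eq_or_ne i ((m : ℤ) + 1) with rfl | hne2
    · rw [hE'm1]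
      rw [hβ'm1] at hx
      exact mul_pos (hg x (by omega))
        (inv_pos.mpr (pitSum_pos hf hg (by omega : r ≤ x)))
    · rw [hE'o _ hne1 hne2]
      exact hpos i h1 h2 x (by rw [← hag i h1 h2 hne1 hne2]; exact hx)

/-! ### the sweeps -/

def betaB (r c i : ℤ) : ℤ := if i ≤ c then min i r else r + 1

noncomputable def Pfold (n r : ℕ) (D : ℤ → ℤ → ℝ) (k : ℕ) : ℤ → ℤ → ℝ :=
  ((List.range k).map (fun j => ((n - 1 - j : ℕ) : ℤ))).foldl
    (fun E m => Tro (r : ℤ) m E) D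

lemma Pfold_succ (n r : ℕ) (D : ℤ → ℤ → ℝ) (k : ℕ) :
    Pfold n r D (k + 1) = Tro (r : ℤ) ((n - 1 - k : ℕ) : ℤ) (Pfold n r D k) := by
  unfold Pfold
  rw [List.range_succ, List.map_append, List.foldl_append]
  rfl

lemma inner_sweep (n r : ℕ) (hr : 1 ≤ r) (hrn : r + 1 ≤ n) (D : ℤ → ℤ → ℝ)
    (hpos : POSn n (betaB (r : ℤ) (n : ℤ)) D) :
    ∀ k : ℕ, k ≤ n - r →
      POSn n (betaB (r : ℤ) ((n : ℤ) - (k : ℤ))) (Pfold n r D k) ∧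
      (∀ i j, matProd (HL n (betaB (r : ℤ) ((n : ℤ) - (k : ℤ))) (Pfold n r D k)) i j
        = matProd (HL n (betaB (r : ℤ) (n : ℤ)) D) i j) := by
  intro k
  induction k with
  | zero =>
    intro _
    have h0 : ((n : ℤ) - ((0 : ℕ) : ℤ)) = (n : ℤ) := by norm_num
    rw [h0]
    exact ⟨hpos, fun i j => rfl⟩
  | succ k ih =>
    intro hk1
    obtain ⟨ihpos, ihmat⟩ := ih (by omega)
    set m : ℕ := n - 1 - k with hmdef
    have hstep := step_lemma n (r : ℤ) m (by exact_mod_cast hr) (by omega) (by omega)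
      (betaB (r : ℤ) ((n : ℤ) - (k : ℤ))) (betaB (r : ℤ) ((n : ℤ) - ((k : ℕ) + 1 : ℕ)))
      (Pfold n r D k)
      (by unfold betaB; split <;> omega)
      (by unfold betaB; split <;> omega)
      (by unfold betaB; split <;> omega)
      (by unfold betaB; split <;> omega)
      (by intro i h1 h2 hne1 hne2; unfold betaB; split <;> split <;> omega)
      ihpos
    rw [Pfold_succ]
    constructor
    · exact hstep.2
    · intro i j
      rw [hstep.1 i j]
      exact ihmat i j

lemma sweep (n r : ℕ) (hr : 1 ≤ r) (hrn : r + 1 ≤ n) (D : ℤ → ℤ → ℝ)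
    (hpos : POSn n (betaB (r : ℤ) (n : ℤ)) D) :
    POSn n (betaB (r : ℤ) (r : ℤ)) (Sop n r D) ∧
      (∀ i j, matProd (HL n (betaB (r : ℤ) (r : ℤ)) (Sop n r D)) i j
        = matProd (HL n (betaB (r : ℤ) (n : ℤ)) D) i j) := by
  have h := inner_sweep n r hr hrn D hpos (n - r) le_rfl
  have hc : ((n : ℤ) - ((n - r : ℕ) : ℤ)) = (r : ℤ) := by omega
  rw [hc] at h
  exact h

noncomputable def Qfold (n : ℕ) (D : ℤ → ℤ → ℝ) (t : ℕ) : ℤ → ℤ → ℝ :=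
  ((List.range t).map (fun j => j + 1)).foldl (fun E r => Sop n r E) D

lemma Qfold_succ (n : ℕ) (D : ℤ → ℤ → ℝ) (t : ℕ) :
    Qfold n D (t + 1) = Sop n (t + 1) (Qfold n D t) := by
  unfold Qfold
  rw [List.range_succ, List.map_append, List.foldl_append]
  rfl

lemma outer_fold (n : ℕ) (hn : 2 ≤ n) (D : ℤ → ℤ → ℝ)
    (hpos : POSn n (betaB 1 (n : ℤ)) D) :
    ∀ t : ℕ, t ≤ n - 1 →
      POSn n (betaB ((t : ℤ) + 1) (n : ℤ)) (Qfold n D t) ∧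
      (∀ i j, matProd (HL n (betaB ((t : ℤ) + 1) (n : ℤ)) (Qfold n D t)) i j
        = matProd (HL n (betaB 1 (n : ℤ)) D) i j) := by
  intro t
  induction t with
  | zero =>
    intro _
    have h0 : (((0 : ℕ) : ℤ) + 1) = (1 : ℤ) := by norm_num
    rw [h0]
    exact ⟨hpos, fun i j => rfl⟩
  | succ t ih =>
    intro ht1
    obtain ⟨ihpos, ihmat⟩ := ih (by omega)
    have hcast : (((t + 1 : ℕ) : ℤ)) = (t : ℤ) + 1 := by push_cast; ring
    have ihpos' : POSn n (betaB ((t + 1 : ℕ) : ℤ) (n : ℤ)) (Qfold n D t) := by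
      rw [hcast]; exact ihpos
    have hsw := sweep n (t + 1) (by omega) (by omega) (Qfold n D t) ihpos'
    rw [Qfold_succ]
    have hβeq : ∀ i : ℤ, 1 ≤ i → i ≤ (n : ℤ) →
        betaB ((t + 1 : ℕ) : ℤ) ((t + 1 : ℕ) : ℤ) i
          = betaB (((t + 1 : ℕ) : ℤ) + 1) (n : ℤ) i := by
      intro i h1 h2; unfold betaB; rw [if_pos h2]; split <;> omega
    constructor
    · intro i h1 h2 x hx
      exact hsw.1 i h1 h2 x (by rw [hβeq i h1 h2]; exact hx)
    · intro i j
      have hHL : HL n (betaB (((t + 1 : ℕ) : ℤ) + 1) (n : ℤ)) (Sop n (t + 1) (Qfold n D t))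
          = HL n (betaB ((t + 1 : ℕ) : ℤ) ((t + 1 : ℕ) : ℤ)) (Sop n (t + 1) (Qfold n D t)) := by
        apply HL_eq
        intro i h1 h2
        exact ⟨(hβeq i h1 h2).symm, rfl⟩
      rw [hHL, hsw.2 i j]
      rw [hcast]
      exact ihmat i j

/-- **The matrix identity (2.25):** with `D̃ = 𝒲D`,
`H_1(D_n)⋯H_1(D_1) = H_n(D̃_n)⋯H_1(D̃_1)` entrywise. -/
theorem full_H_matrix_identity (n : ℕ) (hn : 2 ≤ n) (D : ℤ → ℤ → ℝ)
    (hD : ∀ i : ℤ, 1 ≤ i → i ≤ (n : ℤ) → ∀ x : ℤ, 1 ≤ x → 0 < D i x) :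
    ∀ i j : ℤ, 1 ≤ i → 1 ≤ j →
      matProd ((List.range n).map (fun a => Hmat 1 (D ((n : ℤ) - a)))) i j
        = matProd ((List.range n).map
            (fun a => Hmat ((n : ℤ) - a) (Wop n D ((n : ℤ) - a)))) i j := by
  intro i j hi hj
  have hpos0 : POSn n (betaB 1 (n : ℤ)) D := by
    intro i' h1 h2 x hx
    apply hD i' h1 h2 x
    unfold betaB at hx
    split at hx <;> omega
  obtain ⟨-, hmat⟩ := outer_fold n hn D hpos0 (n - 1) le_rfl
  have eL : (List.range n).map (fun a => Hmat 1 (D ((n : ℤ) - a)))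
      = HL n (betaB 1 (n : ℤ)) D := by
    rw [coe_map_eq n (fun z : ℤ => Hmat 1 (D z))]
    unfold HL
    apply List.map_congr_left (l := List.range n)
    intro a ha
    rw [List.mem_range] at ha
    have hb : betaB 1 (n : ℤ) ((n : ℤ) - (a : ℤ)) = 1 := by
      unfold betaB; split <;> omega
    rw [hb]
  have eR : (List.range n).map (fun a => Hmat ((n : ℤ) - a) (Wop n D ((n : ℤ) - a)))
      = HL n (betaB (((n - 1 : ℕ) : ℤ) + 1) (n : ℤ)) (Qfold n D (n - 1)) := by
    rw [coe_map_eq n (fun z : ℤ => Hmat z (Wop n D z))]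
    unfold HL
    apply List.map_congr_left (l := List.range n)
    intro a ha
    rw [List.mem_range] at ha
    have hb : betaB (((n - 1 : ℕ) : ℤ) + 1) (n : ℤ) ((n : ℤ) - (a : ℤ))
        = (n : ℤ) - (a : ℤ) := by
      unfold betaB; split <;> omega
    rw [hb]
    rfl
  rw [eL, eR]
  exact (hmat i j).symm
end
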